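/- Let $X \subset \Sigma^{\mathbb{Z}}$ be a subshift with property $(D)$. Then the set $E^-(X) = \{x^- \in X_{(-\infty,0]} : \Omega^+_\infty(x^-) \neq \emptyset\} \cap \bigcap_{i \le 0} \{x^- : x_i \in \omega_1^+(x_{(-\infty,i)})\}$ is residual in $X_{(-\infty,0]}$. -/

import Mathlib

open Set

/-- The shift map on bi-infinite sequences. -/
def shiftMap {A : Type*} (x : ℤ → A) : ℤ → A := fun i => x (i + 1)

/-- A subshift: a closed, shift-invariant subset of the full shift. -/
def IsSubshift {A : Type*} [TopologicalSpace A] (X : Set (ℤ → A)) : Prop :=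
  IsClosed X ∧ ∀ x, x ∈ X ↔ shiftMap x ∈ X

/-- `ω_n⁺(x⁻)` for the past `x⁻ = x_{(-∞,0]}` of a point `x`: the set of words `b` of
length `n` for which there is `k` such that every point `y ∈ X` carrying the word
`x_{(-k,0]}` (with arbitrary more remote past) admits a continuation `y' ∈ X` with the
same past `y'_{(-∞,0]} = y_{(-∞,0]}` and carrying `b` on `[1,n]`. -/
def omegaRay {A : Type*} (X : Set (ℤ → A)) (x : ℤ → A) (n : ℕ) : Set (Fin n → A) :=
  {b | ∃ k : ℕ, ∀ y ∈ X, (∀ j : ℤ, -(k : ℤ) < j → j ≤ 0 → y j = x j) →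
    ∃ y' ∈ X, (∀ i : ℤ, i ≤ 0 → y' i = y i) ∧ ∀ l : Fin n, y' ((l : ℤ) + 1) = b l}

/-- `Ω⁺∞(x⁻)`: the set of right-infinite sequences `u ∈ X_{[1,∞)}` all of whose
prefixes of length `n` lie in `ω_n⁺(x⁻)`. -/
def OmegaInf {A : Type*} (X : Set (ℤ → A)) (x : ℤ → A) : Set (ℕ → A) :=
  {u | (∃ z ∈ X, ∀ n : ℕ, z ((n : ℤ) + 1) = u n) ∧
    ∀ n : ℕ, (fun l : Fin n => u l) ∈ omegaRay X x n}

/-- Property (D). -/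
def PropertyD {A : Type*} (X : Set (ℤ → A)) : Prop :=
  ∀ x ∈ X, ∀ m : ℕ, ∃ (k : ℕ) (y : ℤ → A), y ∈ X ∧ m ≤ k ∧
    (∀ j : ℤ, -(m : ℤ) < j → j ≤ 0 → y j = x j) ∧
    (∀ z ∈ X, (∀ j : ℤ, -(k : ℤ) < j → j ≤ 0 → z j = y j) →
      ∃ z' ∈ X, (∀ i : ℤ, i ≤ 0 → z' i = z i) ∧ z' 1 = x 1)

/-- The space of left-infinite configurations `(-∞,0]`. -/
abbrev PastSpace (A : Type*) := {i : ℤ // i ≤ 0} → A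

/-- Restriction of a bi-infinite point to its past `(-∞,0]`. -/
def proj0 {A : Type*} (x : ℤ → A) : PastSpace A := fun j => x j.1

/-- `E⁻(X)`: the set of pasts `x⁻ ∈ X_{(-∞,0]}` with `Ω⁺∞(x⁻) ≠ ∅` and such that for
every `i ≤ 0`, `x_i ∈ ω₁⁺(x_{(-∞,i)})`.  (All conditions depend only on the past of
the representing point.) -/
def EMinus {A : Type*} (X : Set (ℤ → A)) : Set (PastSpace A) :=
  proj0 '' (X ∩ {x | (OmegaInf X x).Nonempty ∧ ∀ i : ℤ, i ≤ 0 →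
    ∃ k : ℕ, ∀ y ∈ X, (∀ j : ℤ, i - (k : ℤ) ≤ j → j < i → y j = x j) →
      ∃ y' ∈ X, (∀ j : ℤ, j < i → y' j = y j) ∧ y' i = x i})

/-! ### Auxiliary material -/

section Aux

variable {A : Type*}

/-- Membership in a subshift is preserved by the inverse shift. -/
lemma shiftInvMem [TopologicalSpace A] {X : Set (ℤ → A)} (hX : IsSubshift X) {x : ℤ → A} :
    (fun j => x (j - 1)) ∈ X ↔ x ∈ X := by
  rw [hX.2]
  have h : shiftMap (fun j => x (j - 1)) = x := by
    funext j; simp [shiftMap]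
  rw [h]

/-- Membership in a subshift is preserved by arbitrary integer shifts. -/
lemma shiftZMem [TopologicalSpace A] {X : Set (ℤ → A)} (hX : IsSubshift X) {x : ℤ → A}
    (hx : x ∈ X) : ∀ t : ℤ, (fun j => x (j + t)) ∈ X := by
  intro t
  induction t using Int.induction_on with
  | zero => simpa using hx
  | succ n ih =>
      have h1 := (hX.2 _).mp ih
      have he : shiftMap (fun j => x (j + (n : ℤ))) = fun j => x (j + ((n : ℤ) + 1)) := by
        funext j; show x (j + 1 + n) = x (j + (n + 1)); congr 1; ring
      rwa [he] at h1
  | pred n ih =>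
      rw [hX.2]
      have he : shiftMap (fun j => x (j + (-(n : ℤ) - 1))) = fun j => x (j + -(n : ℤ)) := by
        funext j; show x (j + 1 + (-(n : ℤ) - 1)) = x (j + -(n : ℤ)); congr 1; ring
      rwa [he]

/-- The key iterated consequence of property (D): for every `x ∈ X`, `m` and `r`,
there is a point `y ∈ X` agreeing with `x` on `(-m,0]` whose window `(-k,0]` forces
continuability by the word `x_1 ⋯ x_r`. -/
lemma claimC [TopologicalSpace A] {X : Set (ℤ → A)} (hX : IsSubshift X) (hD : PropertyD X) :
    ∀ (r : ℕ) (x : ℤ → A), x ∈ X → ∀ m : ℕ, ∃ (k : ℕ) (y : ℤ → A), y ∈ X ∧ m ≤ k ∧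
      (∀ j : ℤ, -(m : ℤ) < j → j ≤ 0 → y j = x j) ∧
      (∀ z ∈ X, (∀ j : ℤ, -(k : ℤ) < j → j ≤ 0 → z j = y j) →
        ∃ z' ∈ X, (∀ i : ℤ, i ≤ 0 → z' i = z i) ∧
          ∀ l : ℤ, 1 ≤ l → l ≤ (r : ℤ) → z' l = x l) := by
  intro r
  induction r with
  | zero =>
      intro x hx m
      exact ⟨m, x, hx, le_refl m, fun j _ _ => rfl,
        fun z hz _ => ⟨z, hz, fun i _ => rfl, fun l h1 h2 => by omega⟩⟩
  | succ r ih =>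
      intro x hx m
      have hx' : shiftMap x ∈ X := (hX.2 x).mp hx
      obtain ⟨k₁, y₁, hy₁X, hk₁, hy₁a, hy₁f⟩ := ih (shiftMap x) hx' (m + 1)
      have hytX : (fun j => y₁ (j - 1)) ∈ X := (shiftInvMem hX).mpr hy₁X
      obtain ⟨k₂, y₂, hy₂X, hk₂, hy₂a, hy₂f⟩ := hD _ hytX (k₁ + 1)
      have hy₁0 : y₁ 0 = x 1 := by
        simpa [shiftMap] using hy₁a 0 (by push_cast; omega) le_rfl
      refine ⟨k₂, y₂, hy₂X, by omega, ?_, ?_⟩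
      · intro j hj1 hj2
        have h1 : y₂ j = y₁ (j - 1) := hy₂a j (by push_cast; omega) hj2
        have h2 : y₁ (j - 1) = shiftMap x (j - 1) :=
          hy₁a (j - 1) (by push_cast; omega) (by omega)
        rw [h1, h2]; show x (j - 1 + 1) = x j; congr 1; omega
      · intro z hzX hza
        obtain ⟨z', hz'X, hz'p, hz'1⟩ := hy₂f z hzX hza
        have hz'1x : z' 1 = x 1 := by
          rw [hz'1]; show y₁ (1 - 1) = x 1
          norm_num [hy₁0]
        have hwX : shiftMap z' ∈ X := (hX.2 z').mp hz'X
        have hwa : ∀ j : ℤ, -(k₁ : ℤ) < j → j ≤ 0 → shiftMap z' j = y₁ j := by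
          intro j hj1 hj2
          show z' (j + 1) = y₁ j
          rcases lt_or_eq_of_le hj2 with h | h
          · have e1 : z' (j + 1) = z (j + 1) := hz'p (j + 1) (by omega)
            have e2 : z (j + 1) = y₂ (j + 1) := hza (j + 1) (by push_cast; omega) (by omega)
            have e3 : y₂ (j + 1) = y₁ (j + 1 - 1) :=
              hy₂a (j + 1) (by push_cast; omega) (by omega)
            rw [e1, e2, e3]; congr 1; omega
          · subst h
            calc z' ((0 : ℤ) + 1) = z' 1 := by norm_num
              _ = x 1 := hz'1x
              _ = y₁ 0 := hy₁0.symm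
        obtain ⟨w', hw'X, hw'p, hw'f⟩ := hy₁f (shiftMap z') hwX hwa
        refine ⟨fun j => w' (j - 1), (shiftInvMem hX).mpr hw'X, ?_, ?_⟩
        · intro i hi
          have e1 : w' (i - 1) = shiftMap z' (i - 1) := hw'p (i - 1) (by omega)
          have e2 : shiftMap z' (i - 1) = z' i := by
            show z' (i - 1 + 1) = z' i; congr 1; omega
          show w' (i - 1) = z i
          rw [e1, e2]; exact hz'p i hi
        · intro l h1 h2
          show w' (l - 1) = x l
          rcases eq_or_lt_of_le h1 with h | h
          · have e1 : w' (l - 1) = shiftMap z' (l - 1) := hw'p (l - 1) (by omega)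
            rw [e1]; show z' (l - 1 + 1) = x l
            have e2 : l - 1 + 1 = l := by omega
            rw [e2, ← h]; exact hz'1x
          · have e := hw'f (l - 1) (by omega) (by push_cast at h2 ⊢; omega)
            rw [e]; show x (l - 1 + 1) = x l; congr 1; omega

/-- `omegaRay` only depends on the past of the base point. -/
lemma omegaRay_congr {X : Set (ℤ → A)} {x x' : ℤ → A}
    (h : ∀ j : ℤ, j ≤ 0 → x j = x' j) (n : ℕ) : omegaRay X x n = omegaRay X x' n := by
  have key : ∀ u v : ℤ → A, (∀ j : ℤ, j ≤ 0 → u j = v j) →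
      omegaRay X u n ⊆ omegaRay X v n := by
    intro u v huv b hb
    obtain ⟨k, hk⟩ := hb
    exact ⟨k, fun y hy hagree =>
      hk y hy fun j h1 h2 => (hagree j h1 h2).trans (huv j h2).symm⟩
  exact Set.Subset.antisymm (key x x' h) (key x' x fun j hj => (h j hj).symm)

/-- The condition `x_i ∈ ω₁⁺(x_{(-∞,i)})`. -/
def goodI (X : Set (ℤ → A)) (x : ℤ → A) (i : ℤ) : Prop :=
  ∃ k : ℕ, ∀ y ∈ X, (∀ j : ℤ, i - (k : ℤ) ≤ j → j < i → y j = x j) →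
    ∃ y' ∈ X, (∀ j : ℤ, j < i → y' j = y j) ∧ y' i = x i

/-- `goodI` only depends on the past of the base point. -/
lemma goodI_congr {X : Set (ℤ → A)} {x x' : ℤ → A} {i : ℤ} (hi : i ≤ 0)
    (h : ∀ j : ℤ, j ≤ 0 → x j = x' j) : goodI X x i ↔ goodI X x' i := by
  have key : ∀ u v : ℤ → A, (∀ j : ℤ, j ≤ 0 → u j = v j) → goodI X u i → goodI X v i := by
    rintro u v huv ⟨k, hk⟩
    refine ⟨k, fun y hy ha => ?_⟩
    obtain ⟨y', hy', hp, he⟩ :=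
      hk y hy fun j h1 h2 => (ha j h1 h2).trans (huv j (by omega)).symm
    exact ⟨y', hy', hp, he.trans (huv i hi)⟩
  exact ⟨key x x' h, key x' x fun j hj => (h j hj).symm⟩

/-- Extension of a past to a bi-infinite configuration. -/
noncomputable def extMap [Nonempty A] (p : PastSpace A) : ℤ → A :=
  fun j => if h : j ≤ 0 then p ⟨j, h⟩ else Classical.arbitrary A

lemma extMap_proj0 [Nonempty A] (x : ℤ → A) : ∀ j : ℤ, j ≤ 0 → extMap (proj0 x) j = x j := by
  intro j hj; simp [extMap, proj0, hj]

/-- The `n`-th openness/denseness target: pasts with nonempty `ω_n⁺`. -/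
def USet [Nonempty A] (X : Set (ℤ → A)) (n : ℕ) : Set (PastSpace A) :=
  {p | (omegaRay X (extMap p) n).Nonempty}

/-- The `i`-th openness/denseness target: pasts with `x_i ∈ ω₁⁺(x_{(-∞,i)})`. -/
def VSet [Nonempty A] (X : Set (ℤ → A)) (i : ℤ) : Set (PastSpace A) :=
  {p | goodI X (extMap p) i}

/-- A set of configurations determined by finitely many coordinates is open. -/
lemma isOpen_of_determined {ι B : Type*} [TopologicalSpace B] [DiscreteTopology B]
    (P : (ι → B) → Prop) (T : Set ι) (hT : T.Finite)
    (h : ∀ p q : ι → B, (∀ j ∈ T, q j = p j) → P p → P q) :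
    IsOpen {p | P p} := by
  rw [isOpen_iff_mem_nhds]
  intro p hp
  have h1 : (⋂ j ∈ T, (fun q : ι → B => q j) ⁻¹' {p j}) ∈ nhds p := by
    refine (Set.Finite.isOpen_biInter hT fun j _ => ?_).mem_nhds (by simp)
    exact (continuous_apply j).isOpen_preimage _ (isOpen_discrete _)
  refine Filter.mem_of_superset h1 fun q hq => h p q (fun j hj => ?_) hp
  simpa using Set.mem_iInter₂.mp hq j hj

/-- Open sets of configuration space contain cylinders. -/
lemma exists_cyl_subset {ι B : Type*} [TopologicalSpace B] {O : Set (ι → B)} (hO : IsOpen O)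
    {p : ι → B} (hp : p ∈ O) :
    ∃ T : Set ι, T.Finite ∧ {q : ι → B | ∀ j ∈ T, q j = p j} ⊆ O := by
  have h1 : O ∈ nhds p := hO.mem_nhds hp
  rw [nhds_pi, Filter.mem_pi] at h1
  obtain ⟨I, hI, t, ht, hsub⟩ := h1
  refine ⟨I, hI, fun q hq => hsub fun j hj => ?_⟩
  rw [hq j hj]; exact mem_of_mem_nhds (ht j)

/-- Any finite set of past coordinates is bounded. -/
lemma exists_bound {T : Set {i : ℤ // i ≤ 0}} (hT : T.Finite) :
    ∃ m : ℕ, ∀ j ∈ T, -(m : ℤ) < j.1 := by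
  obtain ⟨c, hc⟩ := (hT.image (fun j => j.1)).bddBelow
  refine ⟨(-c).toNat + 1, fun j hj => ?_⟩
  have h1 : c ≤ j.1 := hc (Set.mem_image_of_mem _ hj)
  push_cast
  omega

lemma isOpen_USet [Nonempty A] [TopologicalSpace A] [DiscreteTopology A]
    (X : Set (ℤ → A)) (n : ℕ) : IsOpen (USet X n) := by
  have h : USet X n = ⋃ k : ℕ, ⋃ b : Fin n → A, {p : PastSpace A |
      ∀ y ∈ X, (∀ j : ℤ, -(k : ℤ) < j → j ≤ 0 → y j = extMap p j) →
        ∃ y' ∈ X, (∀ i : ℤ, i ≤ 0 → y' i = y i) ∧ ∀ l : Fin n, y' ((l : ℤ) + 1) = b l} := by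
    ext p
    simp only [USet, omegaRay, Set.Nonempty, mem_setOf_eq, mem_iUnion]
    constructor
    · rintro ⟨b, k, hk⟩; exact ⟨k, b, hk⟩
    · rintro ⟨k, b, hk⟩; exact ⟨b, k, hk⟩
  rw [h]
  refine isOpen_iUnion fun k => isOpen_iUnion fun b => ?_
  refine isOpen_of_determined _ (Subtype.val ⁻¹' Set.Ioc (-(k : ℤ)) 0)
    ((Set.finite_Ioc _ _).preimage Subtype.val_injective.injOn) ?_
  intro p q hpq hp y hy ha
  refine hp y hy fun j h1 h2 => (ha j h1 h2).trans ?_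
  have hmem : (⟨j, h2⟩ : {i : ℤ // i ≤ 0}) ∈ Subtype.val ⁻¹' Set.Ioc (-(k : ℤ)) 0 := by
    simp [h1, h2]
  have := hpq _ hmem
  simp only [extMap, dif_pos h2]
  exact this

lemma isOpen_VSet [Nonempty A] [TopologicalSpace A] [DiscreteTopology A]
    (X : Set (ℤ → A)) {i : ℤ} (hi : i ≤ 0) : IsOpen (VSet X i) := by
  have h : VSet X i = ⋃ k : ℕ, {p : PastSpace A |
      ∀ y ∈ X, (∀ j : ℤ, i - (k : ℤ) ≤ j → j < i → y j = extMap p j) →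
        ∃ y' ∈ X, (∀ j : ℤ, j < i → y' j = y j) ∧ y' i = extMap p i} := by
    ext p
    simp only [VSet, goodI, mem_setOf_eq, mem_iUnion]
  rw [h]
  refine isOpen_iUnion fun k => ?_
  refine isOpen_of_determined _ (Subtype.val ⁻¹' Set.Icc (i - (k : ℤ)) i)
    ((Set.finite_Icc _ _).preimage Subtype.val_injective.injOn) ?_
  intro p q hpq hp y hy ha
  have hcongr : ∀ j : ℤ, i - (k : ℤ) ≤ j → j ≤ i → extMap q j = extMap p j := by
    intro j h1 h2
    have hj0 : j ≤ 0 := le_trans h2 hi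
    have hmem : (⟨j, hj0⟩ : {i : ℤ // i ≤ 0}) ∈ Subtype.val ⁻¹' Set.Icc (i - (k : ℤ)) i := by
      simp [h1, h2]
    have := hpq _ hmem
    simp only [extMap, dif_pos hj0]
    exact this
  obtain ⟨y', h1, h2, h3⟩ :=
    hp y hy fun j hj1 hj2 => (ha j hj1 hj2).trans (hcongr j hj1 (le_of_lt hj2))
  exact ⟨y', h1, h2, h3.trans (hcongr i (by omega) le_rfl).symm⟩

/-- If all `ω_n⁺(x⁻)` are nonempty then `Ω⁺∞(x⁻)` is nonempty (compactness). -/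
lemma omegaInf_nonempty [Fintype A] [TopologicalSpace A] [DiscreteTopology A]
    {X : Set (ℤ → A)} (hXc : IsClosed X) {x : ℤ → A} (hx : x ∈ X)
    (h : ∀ n : ℕ, (omegaRay X x n).Nonempty) : (OmegaInf X x).Nonempty := by
  set H : ℕ → Set (ℤ → A) :=
    fun n => {z ∈ X | (fun l : Fin n => z ((l : ℤ) + 1)) ∈ omegaRay X x n} with hH
  have hmono : ∀ n, H (n + 1) ⊆ H n := by
    rintro n z ⟨hzX, hzw⟩
    refine ⟨hzX, ?_⟩
    obtain ⟨k, hk⟩ := hzw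
    refine ⟨k, fun y hy ha => ?_⟩
    obtain ⟨y', h1, h2, h3⟩ := hk y hy ha
    exact ⟨y', h1, h2, fun l => by simpa using h3 l.castSucc⟩
  have hne : ∀ n, (H n).Nonempty := by
    intro n
    obtain ⟨b, k, hk⟩ := h n
    obtain ⟨y', h1, h2, h3⟩ := hk x hx (fun j _ _ => rfl)
    refine ⟨y', h1, ?_⟩
    have he : (fun l : Fin n => y' ((l : ℤ) + 1)) = b := funext h3
    rw [he]; exact ⟨k, hk⟩
  have hcl : ∀ n, IsClosed (H n) := by
    intro n
    have he : H n = X ∩ ((fun z : ℤ → A => fun l : Fin n => z ((l : ℤ) + 1)) ⁻¹'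
        omegaRay X x n) := rfl
    rw [he]
    exact hXc.inter (IsClosed.preimage (continuous_pi fun l => continuous_apply _)
      (isClosed_discrete _))
  obtain ⟨z, hz⟩ := IsCompact.nonempty_iInter_of_sequence_nonempty_isCompact_isClosed
    H hmono hne ((hcl 0).isCompact) hcl
  simp only [Set.mem_iInter] at hz
  refine ⟨fun n => z ((n : ℤ) + 1), ⟨z, (hz 0).1, fun n => rfl⟩, fun n => ?_⟩
  exact (hz n).2

end Aux

section Density

variable {A : Type*} [Fintype A] [Nonempty A] [TopologicalSpace A] [DiscreteTopology A]

lemma dense_USet {X : Set (ℤ → A)} (hX : IsSubshift X) (hD : PropertyD X) (n : ℕ) :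
    Dense (Subtype.val ⁻¹' USet X n : Set ↥(proj0 '' X)) := by
  rw [dense_iff_inter_open]
  rintro U hU hUne
  obtain ⟨O, hO, rfl⟩ := isOpen_induced_iff.mp hU
  obtain ⟨⟨p, hp⟩, hpO⟩ := hUne
  obtain ⟨x, hxX, hpx⟩ := hp
  obtain ⟨T, hTf, hTsub⟩ := exists_cyl_subset hO hpO
  obtain ⟨m, hm⟩ := exists_bound hTf
  obtain ⟨k, y, hyX, hmk, hya, hyf⟩ := claimC hX hD n x hxX m
  refine ⟨⟨proj0 y, ⟨y, hyX, rfl⟩⟩, ?_, ?_⟩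
  · show proj0 y ∈ O
    refine hTsub fun j hj => ?_
    show y j.1 = p j
    rw [← hpx]
    exact hya j.1 (hm j hj) j.2
  · show (omegaRay X (extMap (proj0 y)) n).Nonempty
    rw [omegaRay_congr (fun j hj => extMap_proj0 y j hj) n]
    refine ⟨fun l : Fin n => x ((l : ℤ) + 1), k, fun z hz ha => ?_⟩
    obtain ⟨z', h1, h2, h3⟩ := hyf z hz ha
    refine ⟨z', h1, h2, fun l => ?_⟩
    have hl : (l : ℕ) < n := l.2
    exact h3 ((l : ℤ) + 1) (by omega) (by omega)

lemma dense_VSet {X : Set (ℤ → A)} (hX : IsSubshift X) (hD : PropertyD X) {i : ℤ}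
    (hi : i ≤ 0) : Dense (Subtype.val ⁻¹' VSet X i : Set ↥(proj0 '' X)) := by
  rw [dense_iff_inter_open]
  rintro U hU hUne
  obtain ⟨O, hO, rfl⟩ := isOpen_induced_iff.mp hU
  obtain ⟨⟨p, hp⟩, hpO⟩ := hUne
  obtain ⟨x, hxX, hpx⟩ := hp
  obtain ⟨T, hTf, hTsub⟩ := exists_cyl_subset hO hpO
  obtain ⟨m, hm⟩ := exists_bound hTf
  set s : ℕ := (1 - i).toNat with hs
  have hsi : (s : ℤ) = 1 - i := by omega
  have hx'' : (fun j => x (j + (i - 1))) ∈ X := shiftZMem hX hxX (i - 1)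
  obtain ⟨k, y, hyX, hmk, hya, hyf⟩ := claimC hX hD s _ hx'' m
  obtain ⟨y', hy'X, hy'p, hy'w⟩ := hyf y hyX (fun j _ _ => rfl)
  set w : ℤ → A := fun j => y' (j + (1 - i)) with hw
  have hwX : w ∈ X := shiftZMem hX hy'X (1 - i)
  have hwi : w i = x i := by
    show y' (i + (1 - i)) = x i
    rw [show i + (1 - i) = (1 : ℤ) by ring]
    have h1 := hy'w 1 le_rfl (by omega)
    rw [h1]; show x (1 + (i - 1)) = x i; congr 1; ring
  have hwx : ∀ j : ℤ, -(m : ℤ) < j → j ≤ 0 → w j = x j := by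
    intro j h1 h2
    show y' (j + (1 - i)) = x j
    rcases le_or_gt i j with h | h
    · have h3 := hy'w (j + (1 - i)) (by omega) (by omega)
      rw [h3]; show x (j + (1 - i) + (i - 1)) = x j; congr 1; ring
    · have e1 : y' (j + (1 - i)) = y (j + (1 - i)) := hy'p _ (by omega)
      have e2 := hya (j + (1 - i)) (by omega) (by omega)
      rw [e1, e2]; show x (j + (1 - i) + (i - 1)) = x j; congr 1; ring
  refine ⟨⟨proj0 w, ⟨w, hwX, rfl⟩⟩, ?_, ?_⟩
  · show proj0 w ∈ O
    refine hTsub fun j hj => ?_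
    show w j.1 = p j
    rw [← hpx]
    exact hwx j.1 (hm j hj) j.2
  · show goodI X (extMap (proj0 w)) i
    rw [goodI_congr hi (fun j hj => extMap_proj0 w j hj)]
    refine ⟨k + s, fun u hu hua => ?_⟩
    have huX : (fun j => u (j + (i - 1))) ∈ X := shiftZMem hX hu (i - 1)
    have hmatch : ∀ j : ℤ, -(k : ℤ) < j → j ≤ 0 → (fun j => u (j + (i - 1))) j = y j := by
      intro j h1 h2
      show u (j + (i - 1)) = y j
      have e1 : u (j + (i - 1)) = w (j + (i - 1)) := hua _ (by push_cast; omega) (by omega)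
      rw [e1]; show y' (j + (i - 1) + (1 - i)) = y j
      rw [show j + (i - 1) + (1 - i) = j by ring]
      exact hy'p j h2
    obtain ⟨z', hz'X, hz'p, hz'w⟩ := hyf _ huX hmatch
    refine ⟨fun j => z' (j + (1 - i)), shiftZMem hX hz'X (1 - i), ?_, ?_⟩
    · intro j hj
      show z' (j + (1 - i)) = u j
      have e1 : z' (j + (1 - i)) = (fun j => u (j + (i - 1))) (j + (1 - i)) :=
        hz'p _ (by omega)
      rw [e1]; show u (j + (1 - i) + (i - 1)) = u j; congr 1; ring
    · show z' (i + (1 - i)) = w i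
      rw [show i + (1 - i) = (1 : ℤ) by ring]
      have e1 := hz'w 1 le_rfl (by omega)
      rw [e1]; show x (1 + (i - 1)) = w i
      rw [show (1 : ℤ) + (i - 1) = i by ring]
      exact hwi.symm

/-- The preimage of `E⁻(X)` in `X_{(-∞,0]}` as a countable intersection. -/
lemma key_eq {X : Set (ℤ → A)} (hX : IsSubshift X) :
    (Subtype.val ⁻¹' EMinus X : Set ↥(proj0 '' X)) =
      (⋂ n : ℕ, Subtype.val ⁻¹' USet X n) ∩
        ⋂ n : ℕ, Subtype.val ⁻¹' VSet X (-(n : ℤ)) := by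
  ext ⟨p, hp⟩
  simp only [mem_inter_iff, mem_iInter, mem_preimage]
  constructor
  · rintro ⟨x, ⟨hxX, ⟨u, hu⟩, hI⟩, hpx⟩
    have hax : ∀ j : ℤ, j ≤ 0 → extMap p j = x j := by
      intro j hj; rw [← hpx]; exact extMap_proj0 x j hj
    constructor
    · intro n
      show (omegaRay X (extMap p) n).Nonempty
      rw [omegaRay_congr hax n]
      exact ⟨_, hu.2 n⟩
    · intro n
      show goodI X (extMap p) (-(n : ℤ))
      rw [goodI_congr (by omega) hax]
      exact hI (-(n : ℤ)) (by omega)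
  · rintro ⟨hU, hV⟩
    obtain ⟨x, hxX, hpx⟩ := hp
    have hax : ∀ j : ℤ, j ≤ 0 → extMap p j = x j := by
      intro j hj; rw [← hpx]; exact extMap_proj0 x j hj
    refine ⟨x, ⟨hxX, ?_, ?_⟩, hpx⟩
    · refine omegaInf_nonempty hX.1 hxX fun n => ?_
      have h1 : (omegaRay X (extMap p) n).Nonempty := hU n
      rwa [omegaRay_congr hax n] at h1
    · intro i hi
      have h1 : goodI X (extMap p) (-(((-i).toNat : ℕ) : ℤ)) := hV (-i).toNat
      rw [goodI_congr (by omega) hax] at h1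
      rwa [show -(((-i).toNat : ℕ) : ℤ) = i by omega] at h1

end Density

/-- For a property (D) subshift, `E⁻(X)` is residual (a dense Gδ) in `X_{(-∞,0]}`. -/
theorem EMinus_residual {A : Type*} [Fintype A] [TopologicalSpace A] [DiscreteTopology A]
    (X : Set (ℤ → A)) (hX : IsSubshift X) (hD : PropertyD X) :
    Dense (Subtype.val ⁻¹' EMinus X : Set ↥(proj0 '' X)) ∧
      IsGδ (Subtype.val ⁻¹' EMinus X : Set ↥(proj0 '' X)) := by
  rcases isEmpty_or_nonempty ↥(proj0 '' X) with hE | hE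
  · have h : (Subtype.val ⁻¹' EMinus X : Set ↥(proj0 '' X)) = univ :=
      Set.eq_univ_of_forall fun x => isEmptyElim x
    rw [h]
    exact ⟨dense_univ, IsGδ.univ⟩
  · obtain ⟨⟨p₀, hp₀⟩⟩ := hE
    obtain ⟨x₀, hx₀, -⟩ := hp₀
    haveI : Nonempty A := ⟨x₀ 0⟩
    haveI : CompactSpace ↥(proj0 '' X) := isCompact_iff_compactSpace.mp
      ((hX.1.isCompact).image (continuous_pi fun j => continuous_apply j.1))
    haveI : LocallyCompactSpace ↥(proj0 '' X) := inferInstance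
    rw [key_eq hX]
    constructor
    · have heq : ((⋂ n : ℕ, Subtype.val ⁻¹' USet X n) ∩
          ⋂ n : ℕ, Subtype.val ⁻¹' VSet X (-(n : ℤ)) : Set ↥(proj0 '' X)) =
          ⋂ c : ℕ ⊕ ℕ, Sum.elim (fun n => Subtype.val ⁻¹' USet X n)
            (fun n => Subtype.val ⁻¹' VSet X (-(n : ℤ))) c := by
        ext q
        simp only [mem_inter_iff, mem_iInter]
        constructor
        · rintro ⟨h1, h2⟩ c
          cases c with
          | inl n => exact h1 n
          | inr n => exact h2 n
        · intro h
          exact ⟨fun n => h (Sum.inl n), fun n => h (Sum.inr n)⟩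
      rw [heq]
      refine dense_iInter_of_isOpen ?_ ?_
      · rintro (n | n)
        · exact (isOpen_USet X n).preimage continuous_subtype_val
        · exact (isOpen_VSet X (by omega)).preimage continuous_subtype_val
      · rintro (n | n)
        · exact dense_USet hX hD n
        · exact dense_VSet hX hD (by omega)
    · exact IsGδ.inter
        (IsGδ.iInter fun n => ((isOpen_USet X n).preimage continuous_subtype_val).isGδ)
        (IsGδ.iInter fun n => ((isOpen_VSet X (by omega)).preimage continuous_subtype_val).isGδ)
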